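/- Fix positive integers m and M and let a_ξ = M!/ξ! for multi-indices ξ ∈ ℕⁿ with |ξ| = M. Define, for an array F = (F_α)_{|α|=m} of complex numbers, Ψ(F)_ε := Σ_{|ξ|=M, 2ξ < ε} a_ξ F_{ε−2ξ} for each multi-index ε with |ε| = m + 2M, where 2ξ < ε means 2ξ_i ≤ ε_i for all i with strict inequality for at least one i when 2ξ ≠ ε (i.e., ε − 2ξ is a valid multi-index of length m with ε−2ξ ≥ 0). Then Ψ is injective: F is uniquely determined by Ψ(F). -/

import Mathlib

/-- With `a_ξ = M!/ξ!`, the map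
`Ψ(F)_ε = Σ_{|ξ|=M, 2ξ ≤ ε} a_ξ F_{ε−2ξ}` (for `|ε| = m + 2M`) determines the array
`(F_α)_{|α|=m}` uniquely, i.e. `Ψ` is injective. -/
theorem stmt_8 (n m M : ℕ) (hm : 1 ≤ m) (hM : 1 ≤ M)
    (F G : (Fin n → ℕ) → ℂ)
    (h : ∀ ε : Fin n → ℕ, (∑ i, ε i) = m + 2 * M →
      (∑ ξ ∈ (Finset.Iic ε).filter (fun ξ => (∑ i, ξ i) = M ∧ ∀ i, 2 * ξ i ≤ ε i),
        ((M.factorial : ℂ) / ∏ i, ((ξ i).factorial : ℂ)) * F (ε - 2 • ξ)) =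
      ∑ ξ ∈ (Finset.Iic ε).filter (fun ξ => (∑ i, ξ i) = M ∧ ∀ i, 2 * ξ i ≤ ε i),
        ((M.factorial : ℂ) / ∏ i, ((ξ i).factorial : ℂ)) * G (ε - 2 • ξ)) :
    ∀ α : Fin n → ℕ, (∑ i, α i) = m → F α = G α := by
  rcases Nat.eq_zero_or_pos n with hn | hn
  · intro α hα
    exfalso
    have : (∑ i, α i) = 0 := by subst hn; simp
    omega
  set j : Fin n := ⟨0, hn⟩ with hjdef
  suffices H : ∀ k : ℕ, ∀ α : Fin n → ℕ, (∑ i, α i) = m → m - α j = k → F α = G α by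
    intro α hα; exact H (m - α j) α hα rfl
  intro k
  induction k using Nat.strong_induction_on with
  | _ k ih =>
  intro α hα hk
  set ε : Fin n → ℕ := fun i => α i + (if i = j then 2 * M else 0) with hεdef
  have hε : (∑ i, ε i) = m + 2 * M := by
    simp only [hεdef, Finset.sum_add_distrib, hα, Finset.sum_ite_eq', Finset.mem_univ, if_true]
  have key : ∑ ξ ∈ (Finset.Iic ε).filter (fun ξ => (∑ i, ξ i) = M ∧ ∀ i, 2 * ξ i ≤ ε i),
      ((M.factorial : ℂ) / ∏ i, ((ξ i).factorial : ℂ)) * (F (ε - 2 • ξ) - G (ε - 2 • ξ)) = 0 := by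
    simp only [mul_sub, Finset.sum_sub_distrib, h ε hε, sub_self]
  set ξ₀ : Fin n → ℕ := fun i => if i = j then M else 0 with hξ₀def
  have hmem : ξ₀ ∈ (Finset.Iic ε).filter (fun ξ => (∑ i, ξ i) = M ∧ ∀ i, 2 * ξ i ≤ ε i) := by
    refine Finset.mem_filter.2 ⟨Finset.mem_Iic.2 fun i => ?_, ?_, fun i => ?_⟩
    · by_cases hi : i = j <;> simp [hξ₀def, hεdef, hi] <;> omega
    · simp [hξ₀def, Finset.sum_ite_eq']
    · by_cases hi : i = j <;> simp [hξ₀def, hεdef, hi] <;> omega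
  have hzero : ∀ ξ ∈ ((Finset.Iic ε).filter
      (fun ξ => (∑ i, ξ i) = M ∧ ∀ i, 2 * ξ i ≤ ε i)).erase ξ₀,
      ((M.factorial : ℂ) / ∏ i, ((ξ i).factorial : ℂ)) * (F (ε - 2 • ξ) - G (ε - 2 • ξ)) = 0 := by
    intro ξ hξ
    obtain ⟨hne, hξf⟩ := Finset.mem_erase.1 hξ
    obtain ⟨-, hsum, hle⟩ := Finset.mem_filter.1 hξf
    have hjle : ξ j ≤ M := hsum ▸ Finset.single_le_sum (fun i _ => Nat.zero_le _) (Finset.mem_univ j)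
    have hjlt : ξ j < M := by
      rcases lt_or_eq_of_le hjle with h' | h'
      · exact h'
      · exfalso; apply hne; funext i
        by_cases hi : i = j
        · simp [hξ₀def, hi, h']
        · have hrest : ∑ i ∈ Finset.univ.erase j, ξ i = 0 := by
            have h2 := Finset.add_sum_erase Finset.univ ξ (Finset.mem_univ j)
            omega
          have := Finset.sum_eq_zero_iff.1 hrest i (by simp [hi])
          simp [hξ₀def, hi, this]
    set β : Fin n → ℕ := ε - 2 • ξ with hβdef
    have hβi : ∀ i, β i = ε i - 2 * ξ i := by
      intro i; simp [hβdef, Pi.sub_apply, Pi.smul_apply, smul_eq_mul]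
    have hβadd : ∀ i, β i + 2 * ξ i = ε i := fun i => by
      rw [hβi i]; exact Nat.sub_add_cancel (hle i)
    have hβsum : (∑ i, β i) = m := by
      have h1 : (∑ i, (β i + 2 * ξ i)) = ∑ i, ε i :=
        Finset.sum_congr rfl fun i _ => hβadd i
      rw [Finset.sum_add_distrib, ← Finset.mul_sum, hsum, hε] at h1
      omega
    have hβj : α j < β j := by
      have h2 := hβadd j
      have h3 : ε j = α j + 2 * M := by simp [hεdef]
      omega
    have hβjle : β j ≤ m :=
      hβsum ▸ Finset.single_le_sum (fun i _ => Nat.zero_le _) (Finset.mem_univ j)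
    have := ih (m - β j) (by omega) β hβsum rfl
    rw [this, sub_self, mul_zero]
  have hεξ₀ : ε - 2 • ξ₀ = α := by
    funext i
    simp only [Pi.sub_apply, Pi.smul_apply, smul_eq_mul, hεdef, hξ₀def]
    by_cases hi : i = j <;> simp [hi]
  have hc : (∏ i, ((ξ₀ i).factorial : ℂ)) = (M.factorial : ℂ) := by
    simp [hξ₀def, apply_ite Nat.factorial, Finset.prod_ite_eq']
  rw [← Finset.sum_erase_add _ _ hmem, Finset.sum_eq_zero hzero, zero_add, hεξ₀, hc,
    div_self (by exact_mod_cast Nat.factorial_ne_zero M), one_mul, sub_eq_zero] at key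
  exact key
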